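/- Fix a finite type n with decidable equality. Let E : Matrix n n ℂ → ℝ satisfy: (i) unitary invariance: for every U in the unitary group Matrix.unitaryGroup n ℂ and every Hermitian X one has E(U⋆ * X * U) = E(X); (ii) orthogonal additivity: for all Hermitian X, Y : Matrix n n ℂ with X * Y = 0 one has E(X + Y) = E(X) + E(Y). Then there exists a function h : ℝ → ℝ with h(0) = 0 such that for every X : Matrix n n ℂ with hX : X.IsHermitian, E(X) = ∑ i, h(hX.eigenvalues i), where hX.eigenvalues : n → ℝ are the eigenvalues of X counted with multiplicity. -/

import Mathlib

open Matrix (conjTranspose)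
open scoped Matrix

theorem trace_form_finite_dim
    {n : Type*} [Fintype n] [DecidableEq n]
    (E : Matrix n n ℂ → ℝ)
    (hunitary : ∀ U ∈ Matrix.unitaryGroup n ℂ, ∀ X : Matrix n n ℂ,
      X.IsHermitian → E (star U * X * U) = E X)
    (horth : ∀ X Y : Matrix n n ℂ,
      X.IsHermitian → Y.IsHermitian → X * Y = 0 → E (X + Y) = E X + E Y) :
    ∃ h : ℝ → ℝ, h 0 = 0 ∧
      ∀ (X : Matrix n n ℂ) (hX : X.IsHermitian),
        E X = ∑ i, h (hX.eigenvalues i) := by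
  classical
  have hE0 : E 0 = 0 := by
    have h00 := horth 0 0 (by simp [Matrix.IsHermitian]) (by simp [Matrix.IsHermitian]) (by simp)
    simp only [add_zero] at h00
    linarith
  have hdiagH : ∀ d : n → ℝ, (Matrix.diagonal (fun i => (d i : ℂ))).IsHermitian := fun d =>
    Matrix.isHermitian_diagonal_of_self_adjoint _ (funext fun i => by
      simp [Pi.star_apply, Complex.star_def, Complex.conj_ofReal])
  -- permutation invariance for real diagonal matrices
  have hperm : ∀ (σ : Equiv.Perm n) (d : n → ℝ),
      E (Matrix.diagonal (fun i => (d (σ.symm i) : ℂ))) =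
        E (Matrix.diagonal (fun i => (d i : ℂ))) := by
    intro σ d
    set U : Matrix n n ℂ := σ.permMatrix ℂ with hU
    have hstar : star U = (σ⁻¹).permMatrix ℂ := by
      show Uᴴ = _
      have h1 : Uᴴ = Uᵀ := by
        ext i j
        simp [hU, Matrix.conjTranspose_apply, Matrix.transpose_apply,
          PEquiv.toMatrix_apply, apply_ite (star : ℂ → ℂ)]
      rw [h1, hU, ← PEquiv.toMatrix_symm, ← Equiv.toPEquiv_symm]
      rfl
    have hmem : U ∈ Matrix.unitaryGroup n ℂ := by
      rw [Matrix.mem_unitaryGroup_iff']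
      rw [hstar, hU, PEquiv.toMatrix_toPEquiv_mul]
      ext i j
      simp [Matrix.submatrix_apply, PEquiv.toMatrix_apply, Equiv.toPEquiv_apply,
        Matrix.one_apply, Equiv.apply_symm_apply, eq_comm]
    have hconj : star U * Matrix.diagonal (fun i => (d i : ℂ)) * U =
        Matrix.diagonal (fun i => (d (σ.symm i) : ℂ)) := by
      rw [hstar, hU, PEquiv.toMatrix_toPEquiv_mul, PEquiv.mul_toMatrix_toPEquiv]
      ext i j
      by_cases hij : i = j
      · subst hij
        simp [Matrix.submatrix_apply, Matrix.diagonal_apply_eq, Equiv.Perm.inv_def]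
      · simp only [Matrix.submatrix_apply, id]
        rw [Matrix.diagonal_apply_ne _ hij, Matrix.diagonal_apply_ne]
        intro hc
        exact hij (σ.symm.injective (by simpa [Equiv.Perm.inv_def] using hc))
    have := hunitary U hmem (Matrix.diagonal (fun i => (d i : ℂ))) (hdiagH d)
    rw [hconj] at this
    exact this
  rcases isEmpty_or_nonempty n with hn | hn
  · refine ⟨fun _ => 0, rfl, ?_⟩
    intro X hX
    have : X = 0 := Subsingleton.elim X 0
    simp [this, hE0]
  · obtain ⟨i₀⟩ := hn
    set h : ℝ → ℝ := fun t =>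
      E (Matrix.diagonal (fun i => ((if i = i₀ then t else 0 : ℝ) : ℂ))) with hh
    have hh0 : h 0 = 0 := by
      have he : h 0 = E 0 := by
        rw [hh]
        norm_num
      rw [he, hE0]
    -- single-entry diagonal value
    have hsingle : ∀ (j : n) (t : ℝ),
        E (Matrix.diagonal (fun i => ((if i = j then t else 0 : ℝ) : ℂ))) = h t := by
      intro j t
      have hsw := hperm (Equiv.swap i₀ j) (fun i => if i = i₀ then t else 0)
      simp only [hh]
      rw [← hsw]
      congr 1
      refine congrArg Matrix.diagonal (funext fun i => ?_)
      congr 1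
      rw [Equiv.symm_swap]
      by_cases hij : i = j
      · subst hij; simp
      · rw [if_neg hij, if_neg]
        intro hc
        exact hij (by simpa using congrArg (Equiv.swap i₀ j) hc)
    -- additivity over finsets
    have hsum : ∀ (d : n → ℝ) (s : Finset n),
        E (Matrix.diagonal (fun i => ((if i ∈ s then d i else 0 : ℝ) : ℂ))) =
          ∑ j ∈ s, h (d j) := by
      intro d s
      induction s using Finset.induction with
      | empty => simpa using hE0
      | insert _ _ hjs ih =>
        rename_i j s
        have hdec : (Matrix.diagonal (fun i => ((if i ∈ insert j s then d i else 0 : ℝ) : ℂ)))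
            = Matrix.diagonal (fun i => ((if i = j then d i else 0 : ℝ) : ℂ))
              + Matrix.diagonal (fun i => ((if i ∈ s then d i else 0 : ℝ) : ℂ)) := by
          rw [Matrix.diagonal_add]
          refine congrArg Matrix.diagonal (funext fun i => ?_)
          by_cases hij : i = j
          · subst hij; simp [Finset.mem_insert, hjs]
          · by_cases his : i ∈ s <;> simp [Finset.mem_insert, hij, his]
        have hprod : Matrix.diagonal (fun i => ((if i = j then d i else 0 : ℝ) : ℂ))
            * Matrix.diagonal (fun i => ((if i ∈ s then d i else 0 : ℝ) : ℂ)) = 0 := by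
          rw [Matrix.diagonal_mul_diagonal, ← Matrix.diagonal_zero]
          refine congrArg Matrix.diagonal (funext fun i => ?_)
          by_cases hij : i = j
          · subst hij; simp [hjs]
          · simp [hij]
        rw [hdec, horth _ _ (hdiagH _) (hdiagH _) hprod, ih, Finset.sum_insert hjs]
        congr 1
        have : (fun i => ((if i = j then d i else 0 : ℝ) : ℂ))
            = fun i => ((if i = j then d j else 0 : ℝ) : ℂ) := by
          funext i
          by_cases hij : i = j
          · subst hij; simp
          · simp [hij]
        rw [this, hsingle j (d j)]
    refine ⟨h, hh0, ?_⟩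
    intro X hX
    have hspec : star (hX.eigenvectorUnitary : Matrix n n ℂ) * X * (hX.eigenvectorUnitary : Matrix n n ℂ) =
        Matrix.diagonal (RCLike.ofReal ∘ hX.eigenvalues) := by
      have := hX.conjStarAlgAut_star_eigenvectorUnitary
      rw [Unitary.conjStarAlgAut_star_apply] at this
      exact this
    have hUmem : (hX.eigenvectorUnitary : Matrix n n ℂ) ∈ Matrix.unitaryGroup n ℂ :=
      hX.eigenvectorUnitary.2
    have hEdiag : E X = E (Matrix.diagonal (RCLike.ofReal ∘ hX.eigenvalues)) := by
      rw [← hunitary _ hUmem X hX, hspec]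
    rw [hEdiag]
    have hsum' := hsum hX.eigenvalues Finset.univ
    simp only [Finset.mem_univ, if_true] at hsum'
    rw [← hsum']
    rfl
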